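/- Let e₁, e₂, e₃ denote the standard basis of (ZMod 2)³. There exists a (unique) group homomorphism φ : W → (ZMod 2)³ with φ(s₁) = e₁, φ(s₂) = e₂, φ(s₃) = e₃ and φ(s₄) = e₂; this φ is surjective, and its kernel is isomorphic to ℤ × ℤ. -/

import Mathlib

/-- The Coxeter matrix of the 4-cycle: off-diagonal entries are `2` for cyclically adjacent
indices and `0` (i.e. `∞`) for the two opposite pairs. -/
def C4 : CoxeterMatrix (Fin 4) where
  M := Matrix.of fun i j : Fin 4 ↦
    if i = j then 1
    else if (i.val + 1) % 4 = j.val ∨ (j.val + 1) % 4 = i.val then 2 else 0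
  off_diagonal := by simp only [Matrix.of_apply]; decide

/-- `W`, the right-angled Coxeter group of the 4-cycle. -/
abbrev W : Type := C4.Group

/-- The simple reflections `s₁, s₂, s₃, s₄` of `W`, indexed by `Fin 4`
(so `s 0 = s₁`, `s 1 = s₂`, `s 2 = s₃`, `s 3 = s₄`). -/
def s (i : Fin 4) : W := C4.simple i

/-- The standard basis vectors `e₁, e₂, e₃` of `(ZMod 2)³`. -/
def e1 : ZMod 2 × ZMod 2 × ZMod 2 := (1, 0, 0)
def e2 : ZMod 2 × ZMod 2 × ZMod 2 := (0, 1, 0)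
def e3 : ZMod 2 × ZMod 2 × ZMod 2 := (0, 0, 1)

/- ### Auxiliary: the infinite dihedral group and its universal property -/

abbrev D := DihedralGroup 0
open DihedralGroup

def unZ : ZMod 0 → ℤ := fun a => a
def Zun : ℤ → ZMod 0 := fun a => a

section
variable {G : Type*} [Group G]

lemma inv_invol {σ : G} (hσ : σ * σ = 1) : σ⁻¹ = σ := by rw [inv_eq_iff_mul_eq_one, hσ]

lemma conj_key {σ τ : G} (hσ : σ * σ = 1) (hτ : τ * τ = 1) (n : ℤ) :
    σ * (σ * τ) ^ n * σ = (σ * τ) ^ (-n) := by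
  have h1 : σ * (σ * τ) * σ⁻¹ = (σ * τ)⁻¹ := by
    rw [mul_inv_rev, inv_invol hσ, inv_invol hτ]
    simp only [← mul_assoc, hσ, one_mul]
  calc σ * (σ * τ) ^ n * σ = σ * (σ * τ) ^ n * σ⁻¹ := by rw [inv_invol hσ]
    _ = (σ * (σ * τ) * σ⁻¹) ^ n := by rw [conj_zpow]
    _ = ((σ * τ)⁻¹) ^ n := by rw [h1]
    _ = (σ * τ) ^ (-n) := by rw [inv_zpow, zpow_neg]

/-- Universal property of the infinite dihedral group: two involutions give a hom. -/
def dihedralLift (σ τ : G) (hσ : σ * σ = 1) (hτ : τ * τ = 1) : D →* G where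
  toFun := fun x => match x with
    | r a => (σ * τ) ^ (unZ a)
    | sr a => σ * (σ * τ) ^ (unZ a)
  map_one' := by show (σ * τ) ^ (unZ 0) = 1; rw [show unZ 0 = 0 from rfl, zpow_zero]
  map_mul' := by
    have key := conj_key hσ hτ
    rintro (a | a) (b | b)
    · show (σ*τ)^(unZ (a+b)) = (σ*τ)^(unZ a) * (σ*τ)^(unZ b)
      rw [show unZ (a+b) = unZ a + unZ b from rfl, zpow_add]
    · show σ * (σ*τ)^(unZ (b-a)) = (σ*τ)^(unZ a) * (σ * (σ*τ)^(unZ b))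
      rw [show unZ (b-a) = unZ b - unZ a from rfl, sub_eq_neg_add, zpow_add, ← key]
      simp only [← mul_assoc, hσ, one_mul]
    · show σ * (σ*τ)^(unZ (a+b)) = σ * (σ*τ)^(unZ a) * (σ*τ)^(unZ b)
      rw [show unZ (a+b) = unZ a + unZ b from rfl, zpow_add, mul_assoc]
    · show (σ*τ)^(unZ (b-a)) = σ * (σ*τ)^(unZ a) * (σ * (σ*τ)^(unZ b))
      rw [show unZ (b-a) = unZ b - unZ a from rfl, sub_eq_neg_add, zpow_add, ← key]
      simp only [← mul_assoc, hσ, one_mul]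

@[simp] lemma dihedralLift_r {σ τ : G} (hσ : σ * σ = 1) (hτ : τ * τ = 1) (a : ZMod 0) :
    dihedralLift σ τ hσ hτ (r a) = (σ * τ) ^ (unZ a) := rfl
@[simp] lemma dihedralLift_sr {σ τ : G} (hσ : σ * σ = 1) (hτ : τ * τ = 1) (a : ZMod 0) :
    dihedralLift σ τ hσ hτ (sr a) = σ * (σ * τ) ^ (unZ a) := rfl

lemma prod_zpow {α β : Type*} [Group α] [Group β] (x : α) (y : β) (n : ℤ) :
    (x, y) ^ n = (x ^ n, y ^ n) := rfl
end

lemma r_inv (a : ZMod 0) : (r a : D)⁻¹ = r (-a) :=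
  inv_eq_of_mul_eq_one_right (by rw [r_mul_r, add_neg_cancel, one_def])

lemma r_one_zpow (n : ℤ) : (r 1 : D) ^ n = r (Zun n) := by
  induction n using Int.induction_on with
  | zero => rw [zpow_zero, one_def]; rfl
  | succ k ih => rw [zpow_add_one, ih, r_mul_r]; rfl
  | pred k ih => rw [zpow_sub_one, ih, r_inv, r_mul_r]; rfl

/- ### The isomorphism `W ≃* D × D` -/

noncomputable def cs := C4.toCoxeterSystem

lemma cs_simple (i : Fin 4) : cs.simple i = s i := rfl

lemma s_sq (i : Fin 4) : s i * s i = 1 := cs.simple_mul_simple_self i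

lemma s_comm (i j : Fin 4) (hij : C4 i j = 2) : s i * s j = s j * s i := by
  have h := cs.simple_mul_simple_pow i j
  rw [cs_simple, cs_simple, hij, pow_two] at h
  have h2 : s i * s j = (s i * s j)⁻¹ := by
    rw [eq_inv_iff_mul_eq_one]; exact h
  rw [h2, mul_inv_rev, inv_invol (s_sq j), inv_invol (s_sq i)]

def f : Fin 4 → D × D := ![(sr 0, 1), (1, sr 0), (sr 1, 1), (1, sr 1)]

lemma hf : C4.IsLiftable f := by
  intro i j
  fin_cases i <;> fin_cases j <;> decide

noncomputable def ψ : W →* D × D := cs.lift ⟨f, hf⟩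

lemma ψs (i : Fin 4) : ψ (s i) = f i := cs.lift_apply_simple hf i

noncomputable def χ₁ : D →* W := dihedralLift (s 0) (s 2) (s_sq 0) (s_sq 2)
noncomputable def χ₂ : D →* W := dihedralLift (s 1) (s 3) (s_sq 1) (s_sq 3)

lemma comm01 : Commute (s 0) (s 1) := s_comm 0 1 (by decide)
lemma comm03 : Commute (s 0) (s 3) := s_comm 0 3 (by decide)
lemma comm21 : Commute (s 2) (s 1) := s_comm 2 1 (by decide)
lemma comm23 : Commute (s 2) (s 3) := s_comm 2 3 (by decide)

lemma χcomm : ∀ x y : D, Commute (χ₁ x) (χ₂ y) := by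
  have h1 : Commute (s 0 * s 2) (s 1) := comm01.mul_left comm21
  have h3 : Commute (s 0 * s 2) (s 3) := comm03.mul_left comm23
  have hA : ∀ x : D, Commute (χ₁ x) (s 1) ∧ Commute (χ₁ x) (s 3) := by
    rintro (a | a)
    · exact ⟨h1.zpow_left _, h3.zpow_left _⟩
    · exact ⟨comm01.mul_left (h1.zpow_left _), comm03.mul_left (h3.zpow_left _)⟩
  rintro x (b | b)
  · exact (((hA x).1.mul_right (hA x).2).zpow_right _)
  · exact ((hA x).1.mul_right (((hA x).1.mul_right (hA x).2).zpow_right _))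

noncomputable def χ : D × D →* W := χ₁.noncommCoprod χ₂ χcomm

lemma χ_apply (x y : D) : χ (x, y) = χ₁ x * χ₂ y := rfl

lemma χ₁_r (a : ZMod 0) : χ₁ (r a) = (s 0 * s 2) ^ (unZ a) := rfl
lemma χ₁_sr (a : ZMod 0) : χ₁ (sr a) = s 0 * (s 0 * s 2) ^ (unZ a) := rfl
lemma χ₂_r (a : ZMod 0) : χ₂ (r a) = (s 1 * s 3) ^ (unZ a) := rfl
lemma χ₂_sr (a : ZMod 0) : χ₂ (sr a) = s 1 * (s 1 * s 3) ^ (unZ a) := rfl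

lemma ψt : ψ (s 0 * s 2) = (r 1, 1) := by rw [map_mul, ψs, ψs]; decide
lemma ψt' : ψ (s 1 * s 3) = (1, r 1) := by rw [map_mul, ψs, ψs]; decide

lemma ψχ₁ (x : D) : ψ (χ₁ x) = (x, 1) := by
  rcases x with a | a
  · rw [χ₁_r, map_zpow, ψt, prod_zpow, one_zpow, _root_.r_one_zpow]
    rfl
  · rw [χ₁_sr, map_mul, map_zpow, ψt, ψs, prod_zpow, one_zpow, _root_.r_one_zpow]
    show (sr 0 * r (Zun (unZ a)), 1 * 1) = _
    rw [sr_mul_r, one_mul]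
    show (sr (0 + a), (1:D)) = _
    rw [zero_add]

lemma ψχ₂ (y : D) : ψ (χ₂ y) = (1, y) := by
  rcases y with a | a
  · rw [χ₂_r, map_zpow, ψt', prod_zpow, one_zpow, _root_.r_one_zpow]
    rfl
  · rw [χ₂_sr, map_mul, map_zpow, ψt', ψs, prod_zpow, one_zpow, _root_.r_one_zpow]
    show (1 * 1, sr 0 * r (Zun (unZ a))) = _
    rw [sr_mul_r, one_mul]
    show ((1:D), sr (0 + a)) = _
    rw [zero_add]

lemma ψχ (d : D × D) : ψ (χ d) = d := by
  rcases d with ⟨x, y⟩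
  rw [χ_apply, map_mul, ψχ₁, ψχ₂, Prod.mk_mul_mk, mul_one, one_mul]

lemma χψ (w : W) : χ (ψ w) = w := by
  have h : χ.comp ψ = MonoidHom.id W := by
    apply cs.ext_simple
    intro i
    rw [MonoidHom.comp_apply, MonoidHom.id_apply, cs_simple, ψs]
    fin_cases i
    · show χ₁ (sr 0) * χ₂ 1 = s 0
      rw [map_one, mul_one, χ₁_sr, show unZ 0 = 0 from rfl, zpow_zero, mul_one]
    · show χ₁ 1 * χ₂ (sr 0) = s 1
      rw [map_one, one_mul, χ₂_sr, show unZ 0 = 0 from rfl, zpow_zero, mul_one]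
    · show χ₁ (sr 1) * χ₂ 1 = s 2
      rw [map_one, mul_one, χ₁_sr, show unZ 1 = 1 from rfl, zpow_one, ← mul_assoc,
        s_sq 0, one_mul]
    · show χ₁ 1 * χ₂ (sr 1) = s 3
      rw [map_one, one_mul, χ₂_sr, show unZ 1 = 1 from rfl, zpow_one, ← mul_assoc,
        s_sq 1, one_mul]
  exact DFunLike.congr_fun h w

/- ### The target group and the homomorphism -/

abbrev M2 := Multiplicative (ZMod 2 × ZMod 2 × ZMod 2)

def θ₁ : D →* M2 := dihedralLift (Multiplicative.ofAdd e1) (Multiplicative.ofAdd e3)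
  (by decide) (by decide)
def θ₂ : D →* M2 := dihedralLift (Multiplicative.ofAdd e2) (Multiplicative.ofAdd e2)
  (by decide) (by decide)

def θ : D × D →* M2 := θ₁.coprod θ₂

lemma θ_apply (x y : D) : θ (x, y) = θ₁ x * θ₂ y := rfl

noncomputable def φ₀ : W →* M2 := θ.comp ψ

-- exponent 2 facts in M2
lemma M2sq (x : M2) : x * x = 1 := by revert x; decide

lemma M2_zpow_even {x : M2} {n : ℤ} (h : Even n) : x ^ n = 1 := by
  obtain ⟨k, rfl⟩ := h
  rw [zpow_add]
  exact M2sq _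

lemma M2_zpow_odd {x : M2} {n : ℤ} (h : Odd n) : x ^ n = x := by
  obtain ⟨k, rfl⟩ := h
  rw [zpow_add, zpow_one, M2_zpow_even ⟨k, two_mul k⟩, one_mul]

lemma e2sq : (Multiplicative.ofAdd e2 : M2) * Multiplicative.ofAdd e2 = 1 := by decide

lemma θ₁_r (a : ZMod 0) :
    θ₁ (r a) = (Multiplicative.ofAdd e1 * Multiplicative.ofAdd e3) ^ (unZ a) := rfl
lemma θ₁_sr (a : ZMod 0) :
    θ₁ (sr a) = Multiplicative.ofAdd e1 *
      (Multiplicative.ofAdd e1 * Multiplicative.ofAdd e3) ^ (unZ a) := rfl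
lemma θ₂_r (a : ZMod 0) : θ₂ (r a) = 1 := by
  show (Multiplicative.ofAdd e2 * Multiplicative.ofAdd e2 : M2) ^ (unZ a) = 1
  rw [e2sq, one_zpow]
lemma θ₂_sr (a : ZMod 0) : θ₂ (sr a) = Multiplicative.ofAdd e2 := by
  show Multiplicative.ofAdd e2 *
    (Multiplicative.ofAdd e2 * Multiplicative.ofAdd e2 : M2) ^ (unZ a) = _
  rw [e2sq, one_zpow, mul_one]

lemma φ₀s : φ₀ (s 0) = Multiplicative.ofAdd e1 ∧ φ₀ (s 1) = Multiplicative.ofAdd e2 ∧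
    φ₀ (s 2) = Multiplicative.ofAdd e3 ∧ φ₀ (s 3) = Multiplicative.ofAdd e2 := by
  refine ⟨?_, ?_, ?_, ?_⟩
  · show θ (ψ (s 0)) = _
    rw [ψs]
    show θ ((sr 0 : D), (1 : D)) = _
    rw [θ_apply, θ₁_sr, map_one, mul_one, show unZ 0 = 0 from rfl, zpow_zero, mul_one]
  · show θ (ψ (s 1)) = _
    rw [ψs]
    show θ ((1 : D), (sr 0 : D)) = _
    rw [θ_apply, θ₂_sr, map_one, one_mul]
  · show θ (ψ (s 2)) = _
    rw [ψs]
    show θ ((sr 1 : D), (1 : D)) = _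
    rw [θ_apply, θ₁_sr, map_one, mul_one, show unZ 1 = 1 from rfl, zpow_one]
    decide
  · show θ (ψ (s 3)) = _
    rw [ψs]
    show θ ((1 : D), (sr 1 : D)) = _
    rw [θ_apply, θ₂_sr, map_one, one_mul]

/-- Any hom with the prescribed simple values equals `φ₀`. -/
lemma φ_unique (φ : W →* M2)
    (h : φ (s 0) = Multiplicative.ofAdd e1 ∧ φ (s 1) = Multiplicative.ofAdd e2 ∧
      φ (s 2) = Multiplicative.ofAdd e3 ∧ φ (s 3) = Multiplicative.ofAdd e2) : φ = φ₀ := by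
  apply cs.ext_simple
  intro i
  rw [cs_simple]
  obtain ⟨h0, h1, h2, h3⟩ := h
  obtain ⟨g0, g1, g2, g3⟩ := φ₀s
  fin_cases i <;> simp_all

/- ### Surjectivity -/

lemma φ₀_surj : Function.Surjective φ₀ := by
  intro m
  refine ⟨(s 0) ^ (m.toAdd.1.val) * (s 1) ^ (m.toAdd.2.1.val) * (s 2) ^ (m.toAdd.2.2.val), ?_⟩
  obtain ⟨g0, g1, g2, g3⟩ := φ₀s
  rw [map_mul, map_mul, map_pow, map_pow, map_pow, g0, g1, g2]
  revert m
  decide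

/- ### The kernel -/

lemma tt'_comm : Commute (s 0 * s 2) (s 1 * s 3) :=
  (comm01.mul_left comm21).mul_right (comm03.mul_left comm23)

noncomputable def ι : Multiplicative (ℤ × ℤ) →* W where
  toFun := fun p => (s 0 * s 2) ^ (p.toAdd.1 * 2) * (s 1 * s 3) ^ (p.toAdd.2)
  map_one' := by simp
  map_mul' := by
    intro p q
    show (s 0 * s 2) ^ (((Multiplicative.toAdd p).1 + (Multiplicative.toAdd q).1) * 2) *
        (s 1 * s 3) ^ ((Multiplicative.toAdd p).2 + (Multiplicative.toAdd q).2) =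
      ((s 0 * s 2) ^ ((Multiplicative.toAdd p).1 * 2) *
        (s 1 * s 3) ^ ((Multiplicative.toAdd p).2)) *
      ((s 0 * s 2) ^ ((Multiplicative.toAdd q).1 * 2) *
        (s 1 * s 3) ^ ((Multiplicative.toAdd q).2))
    rw [add_mul, zpow_add, zpow_add]
    exact ((tt'_comm.zpow_left _).zpow_right _).mul_mul_mul_comm _ _

lemma ι_apply (p : Multiplicative (ℤ × ℤ)) :
    ι p = (s 0 * s 2) ^ (p.toAdd.1 * 2) * (s 1 * s 3) ^ (p.toAdd.2) := rfl

lemma ψι (p : Multiplicative (ℤ × ℤ)) :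
    ψ (ι p) = (r (Zun (p.toAdd.1 * 2)), r (Zun p.toAdd.2)) := by
  rw [ι_apply, map_mul, map_zpow, map_zpow, ψt, ψt', prod_zpow, prod_zpow,
    one_zpow, one_zpow, _root_.r_one_zpow, _root_.r_one_zpow, Prod.mk_mul_mk, mul_one, one_mul]

lemma ι_inj : Function.Injective ι := by
  intro p q h
  have h2 := congrArg ψ h
  rw [ψι, ψι, Prod.mk.injEq, r.injEq, r.injEq] at h2
  obtain ⟨ha, hb⟩ := h2
  have ha' : p.toAdd.1 * 2 = q.toAdd.1 * 2 := congrArg unZ ha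
  have hb' : p.toAdd.2 = q.toAdd.2 := congrArg unZ hb
  have ha'' : p.toAdd.1 = q.toAdd.1 := by omega
  exact Multiplicative.toAdd.injective (Prod.ext ha'' hb')

lemma range_eq_ker : ι.range = φ₀.ker := by
  apply le_antisymm
  · rintro w ⟨p, rfl⟩
    have h0 : φ₀ (ι p) = θ (ψ (ι p)) := rfl
    rw [MonoidHom.mem_ker, h0, ψι, θ_apply, θ₁_r, θ₂_r, mul_one]
    exact M2_zpow_even ⟨p.toAdd.1, by show _ * 2 = _; ring⟩
  · intro w hw
    rw [MonoidHom.mem_ker] at hw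
    have hw0 : θ (ψ w) = 1 := hw
    have hrec : w = χ (ψ w) := (χψ w).symm
    rcases hd : ψ w with ⟨x, y⟩
    rw [hd] at hw0 hrec
    rw [θ_apply] at hw0
    rcases x with a | a <;> rcases y with b | b
    · -- r a, r b
      rw [θ₁_r, θ₂_r, mul_one] at hw0
      rcases Int.even_or_odd (unZ a) with he | ho
      · obtain ⟨k, hk⟩ := he
        refine ⟨Multiplicative.ofAdd (k, unZ b), ?_⟩
        rw [hrec, ι_apply, χ_apply, χ₁_r, χ₂_r]
        show (s 0 * s 2) ^ (k * 2) * (s 1 * s 3) ^ (unZ b) = _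
        rw [hk, show k + k = k * 2 by ring]
      · exfalso
        rw [M2_zpow_odd ho] at hw0
        exact absurd hw0 (by decide)
    · -- r a, sr b
      exfalso
      rw [θ₁_r, θ₂_sr] at hw0
      rcases Int.even_or_odd (unZ a) with he | ho
      · rw [M2_zpow_even he, one_mul] at hw0
        exact absurd hw0 (by decide)
      · rw [M2_zpow_odd ho] at hw0
        exact absurd hw0 (by decide)
    · -- sr a, r b
      exfalso
      rw [θ₁_sr, θ₂_r, mul_one] at hw0
      rcases Int.even_or_odd (unZ a) with he | ho
      · rw [M2_zpow_even he, mul_one] at hw0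
        exact absurd hw0 (by decide)
      · rw [M2_zpow_odd ho] at hw0
        exact absurd hw0 (by decide)
    · -- sr a, sr b
      exfalso
      rw [θ₁_sr, θ₂_sr] at hw0
      rcases Int.even_or_odd (unZ a) with he | ho
      · rw [M2_zpow_even he, mul_one] at hw0
        exact absurd hw0 (by decide)
      · rw [M2_zpow_odd ho] at hw0
        exact absurd hw0 (by decide)

/- ### Main theorem -/

/-- There is a unique group homomorphism `φ : W → (ZMod 2)³` with `φ(s₁) = e₁`,
`φ(s₂) = e₂`, `φ(s₃) = e₃`, `φ(s₄) = e₂`; it is surjective and its kernel is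
isomorphic to `ℤ × ℤ`. -/
theorem stmt5 :
    (∃! φ : W →* Multiplicative (ZMod 2 × ZMod 2 × ZMod 2),
      φ (s 0) = Multiplicative.ofAdd e1 ∧ φ (s 1) = Multiplicative.ofAdd e2 ∧
      φ (s 2) = Multiplicative.ofAdd e3 ∧ φ (s 3) = Multiplicative.ofAdd e2) ∧
    ∀ φ : W →* Multiplicative (ZMod 2 × ZMod 2 × ZMod 2),
      (φ (s 0) = Multiplicative.ofAdd e1 ∧ φ (s 1) = Multiplicative.ofAdd e2 ∧
       φ (s 2) = Multiplicative.ofAdd e3 ∧ φ (s 3) = Multiplicative.ofAdd e2) →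
      Function.Surjective φ ∧ Nonempty (φ.ker ≃* Multiplicative (ℤ × ℤ)) := by
  constructor
  · exact ⟨φ₀, φ₀s, fun φ h => φ_unique φ h⟩
  · intro φ h
    rw [φ_unique φ h]
    refine ⟨φ₀_surj, ⟨?_⟩⟩
    exact (MulEquiv.subgroupCongr range_eq_ker.symm).trans (MonoidHom.ofInjective ι_inj).symm
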